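/- For all integers k ≥ 2 and m ≥ 1, f(k,m) = m + Σ_{i=1}^{m-1} [ C(k(i+1) - 1, k) - C(ki, k) ]. -/

import Mathlib

open Finset

def b (k l : ℕ) : ℚ :=
  ((l - 1 : ℚ) / l) *
    ∑ i ∈ Finset.range l, (-1 : ℚ) ^ i * (l.choose i) * ((k * (l - i)).choose k)

def f (k m : ℕ) : ℚ := m + ∑ l ∈ Finset.Icc 2 k, b k l * (m.choose l)


section helpers
open Nat Polynomial

theorem key_term (k l i : ℕ) (hk : 1 ≤ k) (hil : i + 1 ≤ l) :
    ((l - 1 : ℚ)/l) * ((l.choose (i+1) : ℚ) * ((k*i+k).choose k : ℚ)) =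
      ((l-1).choose i : ℚ) * ((k*i+k-1).choose k : ℚ)
      + ((l-1).choose (i+1) : ℚ) * ((k*i+k).choose k : ℚ) := by
  have hl : (l:ℚ) ≠ 0 := by
    have : 0 < l := by omega
    exact_mod_cast this.ne'
  have hK : (k:ℚ) ≠ 0 := by
    have : 0 < k := hk
    exact_mod_cast this.ne'
  -- f1 : (k*(i+1)) * B = A * (k*i)  in ℕ
  have e1 : (k*i+k) * ((k*i+k-1).choose k) = (k*i+k).choose k * (k*i) := by
    have h1 : (k*i+k-1) + 1 = k*i+k := by omega
    have h2 := Nat.add_one_mul_choose_eq (k*i+k-1) k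
    rw [h1] at h2
    have h3 := Nat.choose_succ_right_eq (k*i+k) k
    have h4 : k*i+k-k = k*i := by omega
    rw [h4] at h3
    exact h2.trans h3
  have f1 : ((k:ℚ)*i+k) * ((k*i+k-1).choose k : ℚ) = ((k*i+k).choose k : ℚ) * ((k:ℚ)*i) := by
    exact_mod_cast e1
  have f1' : ((i:ℚ)+1) * ((k*i+k-1).choose k : ℚ) = ((k*i+k).choose k : ℚ) * i := by
    apply mul_left_cancel₀ hK
    linear_combination f1
  -- f2 : l * C(l-1,i) = C(l,i+1)*(i+1)
  have e2 : l * ((l-1).choose i) = l.choose (i+1) * (i+1) := by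
    have h1 : (l-1) + 1 = l := by omega
    have h2 := Nat.add_one_mul_choose_eq (l-1) i
    rw [h1] at h2
    exact h2
  have f2 : (l:ℚ) * ((l-1).choose i : ℚ) = (l.choose (i+1) : ℚ) * ((i:ℚ)+1) := by
    exact_mod_cast e2
  -- f3a : C(l,i+1)*(l-(i+1)) = C(l,i+2)*(i+2)
  have e3a := Nat.choose_succ_right_eq l (i+1)
  have f3a : (l.choose (i+2) : ℚ) * ((i:ℚ)+2) = (l.choose (i+1) : ℚ) * ((l:ℚ) - (i+1)) := by
    have hc : ((l - (i+1) : ℕ) : ℚ) = (l:ℚ) - (i+1) := by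
      push_cast [Nat.cast_sub hil]
      ring
    rw [← hc]
    exact_mod_cast e3a
  -- f3b : l * C(l-1,i+1) = C(l,i+2)*(i+2)
  have e3b : l * ((l-1).choose (i+1)) = l.choose (i+2) * (i+2) := by
    have h1 : (l-1) + 1 = l := by omega
    have h2 := Nat.add_one_mul_choose_eq (l-1) (i+1)
    rw [h1] at h2
    exact h2
  have f3b : (l:ℚ) * ((l-1).choose (i+1) : ℚ) = (l.choose (i+2) : ℚ) * ((i:ℚ)+2) := by
    exact_mod_cast e3b
  rw [div_mul_eq_mul_div, div_eq_iff hl]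
  linear_combination (-((k*i+k).choose k : ℚ)) * f3a - ((k*i+k).choose k : ℚ) * f3b
    - ((k*i+k-1).choose k : ℚ) * f2 - (l.choose (i+1) : ℚ) * f1'

theorem fwdDiff_iter_poly_eval (j : ℕ) : ∀ (P : ℚ[X]), P.degree < j →
    (fwdDiff 1)^[j] (fun n : ℕ => P.eval (n:ℚ)) = 0 := by
  induction j with
  | zero =>
    intro P hP
    have hP0 : P = 0 := degree_eq_bot.mp
      (Nat.WithBot.lt_zero_iff.mp (by exact_mod_cast hP))
    subst hP0
    funext n; simp
  | succ j IH =>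
    intro P hP
    rw [Function.iterate_succ_apply]
    have hstep : fwdDiff 1 (fun n : ℕ => P.eval (n:ℚ))
        = fun n : ℕ => (P.comp (X + C 1) - P).eval (n:ℚ) := by
      funext n
      simp only [fwdDiff, eval_sub, eval_comp, eval_add, eval_X, eval_C]
      push_cast
      ring
    rw [hstep]
    apply IH
    rcases eq_or_ne P.natDegree 0 with h0 | h0
    · obtain ⟨a, rfl⟩ := Polynomial.natDegree_eq_zero.mp h0
      simp only [C_comp, sub_self, degree_zero]
      exact WithBot.bot_lt_coe _
    · have hP0 : P ≠ 0 := fun h => h0 (by simp [h])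
      have hq : (X + C (1:ℚ)).natDegree = 1 := natDegree_X_add_C 1
      have hdc : (P.comp (X + C 1)).natDegree = P.natDegree := by
        rw [natDegree_comp, hq, mul_one]
      have hlc : (P.comp (X + C 1)).leadingCoeff = P.leadingCoeff := by
        rw [leadingCoeff_comp (by rw [hq]; exact one_ne_zero),
          (monic_X_add_C (1:ℚ)).leadingCoeff, one_pow, mul_one]
      have hc0 : P.comp (X + C 1) ≠ 0 := by
        intro h
        apply hP0
        rw [← leadingCoeff_eq_zero, ← hlc, h, leadingCoeff_zero]
      have hd1 : (P.comp (X + C 1)).degree = P.degree := by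
        rw [degree_eq_natDegree hc0, degree_eq_natDegree hP0, hdc]
      have hsub := degree_sub_lt hd1 hc0 hlc
      rw [hd1] at hsub
      have hnd : P.natDegree ≤ j :=
        Nat.lt_succ_iff.mp ((natDegree_lt_iff_degree_lt hP0).mpr hP)
      calc (P.comp (X + C 1) - P).degree < P.degree := hsub
        _ = (P.natDegree : WithBot ℕ) := degree_eq_natDegree hP0
        _ ≤ (j : WithBot ℕ) := by exact_mod_cast hnd

def Hf (k : ℕ) : ℕ → ℚ := fun j => ((k*j + k - 1).choose k : ℚ) - ((k*j).choose k : ℚ)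

theorem cast_choose_prod (n r : ℕ) :
    ((n.choose r : ℚ)) * r.factorial = ∏ i ∈ range r, ((n:ℚ) - i) := by
  have h1 : (n.choose r) * r.factorial = n.descFactorial r := by
    rw [descFactorial_eq_factorial_mul_choose, mul_comm]
  rcases le_or_gt r n with h | h
  · have h2 : ((n.descFactorial r : ℕ) : ℚ) = ∏ i ∈ range r, ((n:ℚ) - i) := by
      rw [descFactorial_eq_prod_range, Nat.cast_prod]
      refine Finset.prod_congr rfl fun i hi => ?_
      rw [Nat.cast_sub (le_trans (le_of_lt (mem_range.mp hi)) h)]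
    rw [← h2]
    exact_mod_cast congrArg (Nat.cast (R := ℚ)) h1
  · have h2 : n.descFactorial r = 0 := Nat.descFactorial_eq_zero_iff_lt.mpr h
    have h3 : ∏ i ∈ range r, ((n:ℚ) - i) = 0 :=
      Finset.prod_eq_zero (mem_range.mpr h) (by simp)
    rw [h3]
    have := congrArg (Nat.cast (R := ℚ)) (h1.trans h2)
    push_cast at this
    linarith

noncomputable def Qpoly (k : ℕ) : ℚ[X] :=
  ((k:ℚ)^k / k.factorial) •
    ((∏ i ∈ range k, (X + C ((((k:ℚ) - 1 - i))/k))) -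
      ∏ i ∈ range k, (X + C (-((i:ℚ)/k))))

theorem Hf_eval (k : ℕ) (hk : 1 ≤ k) (n : ℕ) : Hf k n = (Qpoly k).eval (n:ℚ) := by
  have hK : (k:ℚ) ≠ 0 := by
    have : 0 < k := hk; exact_mod_cast this.ne'
  have hF : (k.factorial : ℚ) ≠ 0 := by exact_mod_cast k.factorial_ne_zero
  have ev : ∀ (g : ℕ → ℚ), (∏ i ∈ range k, (X + C (g i))).eval (n:ℚ)
      = ∏ i ∈ range k, ((n:ℚ) + g i) := by
    intro g; rw [eval_prod]; exact Finset.prod_congr rfl fun i _ => by simp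
  have key : ∀ (m : ℕ) (g : ℕ → ℚ), (∀ i, i < k → (m:ℚ) = (k:ℚ)*n + (k:ℚ)*(g i) + i) →
      ((m.choose k : ℚ)) = (k:ℚ)^k / k.factorial * ∏ i ∈ range k, ((n:ℚ) + g i) := by
    intro m g hg
    have h1 : ((m.choose k : ℚ)) = (∏ i ∈ range k, ((m:ℚ) - i)) / k.factorial := by
      rw [eq_div_iff hF]; exact cast_choose_prod m k
    have h2 : (k:ℚ)^k * ∏ i ∈ range k, ((n:ℚ) + g i)
        = ∏ i ∈ range k, ((k:ℚ) * ((n:ℚ) + g i)) := by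
      rw [Finset.prod_mul_distrib, Finset.prod_const, card_range]
    have h3 : ∏ i ∈ range k, ((m:ℚ) - i) = ∏ i ∈ range k, ((k:ℚ) * ((n:ℚ) + g i)) := by
      refine Finset.prod_congr rfl fun i hi => ?_
      have := hg i (mem_range.mp hi)
      rw [this]; ring
    rw [h1, h3, ← h2]; ring
  have c1 : (((k*n + k - 1).choose k : ℕ) : ℚ)
      = (k:ℚ)^k / k.factorial * ∏ i ∈ range k, ((n:ℚ) + ((k:ℚ) - 1 - i)/k) := by
    apply key
    intro i hi
    have hcast : ((k*n + k - 1 : ℕ) : ℚ) = (k:ℚ)*n + k - 1 := by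
      have h1 : (1:ℕ) ≤ k*n + k := by nlinarith
      push_cast [Nat.cast_sub h1]
      ring
    rw [hcast]
    field_simp
    ring
  have c2 : (((k*n).choose k : ℕ) : ℚ)
      = (k:ℚ)^k / k.factorial * ∏ i ∈ range k, ((n:ℚ) + (-((i:ℚ)/k))) := by
    apply key
    intro i hi
    push_cast
    field_simp
    ring
  rw [Hf]
  simp only [Qpoly, smul_eq_C_mul, eval_mul, eval_C, eval_sub, ev]
  rw [c1, c2]
  ring

theorem Qpoly_degree (k : ℕ) (hk : 1 ≤ k) : (Qpoly k).degree < (k : ℕ) := by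
  set M1 := ∏ i ∈ range k, (X + C ((((k:ℚ) - 1 - i))/k)) with hM1
  set M2 := ∏ i ∈ range k, (X + C (-((i:ℚ)/k))) with hM2
  have m1 : M1.Monic := monic_prod_of_monic _ _ fun i _ => monic_X_add_C _
  have m2 : M2.Monic := monic_prod_of_monic _ _ fun i _ => monic_X_add_C _
  have d1 : M1.natDegree = k := by
    rw [hM1, natDegree_prod_of_monic _ _ fun i _ => monic_X_add_C _,
      Finset.sum_congr rfl fun i _ => natDegree_X_add_C _]
    simp
  have d2 : M2.natDegree = k := by
    rw [hM2, natDegree_prod_of_monic _ _ fun i _ => monic_X_add_C _,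
      Finset.sum_congr rfl fun i _ => natDegree_X_add_C _]
    simp
  have hdeq : M1.degree = M2.degree := by
    rw [degree_eq_natDegree m1.ne_zero, degree_eq_natDegree m2.ne_zero, d1, d2]
  have hsub : (M1 - M2).degree < M1.degree :=
    degree_sub_lt hdeq m1.ne_zero (by rw [m1.leadingCoeff, m2.leadingCoeff])
  have : (Qpoly k).degree ≤ (M1 - M2).degree := degree_smul_le _ _
  refine lt_of_le_of_lt this (lt_of_lt_of_le hsub ?_)
  rw [degree_eq_natDegree m1.ne_zero, d1]

theorem b_eq_diff (k l : ℕ) (hk : 1 ≤ k) (hl : 1 ≤ l) :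
    b k l = (fwdDiff 1)^[l-1] (Hf k) 0 := by
  have hl1 : l - 1 + 1 = l := by omega
  have hsum := fwdDiff_iter_eq_sum_shift (1:ℕ) (Hf k) (l-1) 0
  rw [hl1] at hsum
  rw [hsum]
  have step1 : ∀ i : ℕ, (((-1:ℤ)^(l-1-i) * ((l-1).choose i)) • Hf k (0 + i • 1))
      = (-1:ℚ)^(l-1-i) * (((l-1).choose i : ℚ)) * (((k*i+k-1).choose k : ℚ))
        - (-1:ℚ)^(l-1-i) * (((l-1).choose i : ℚ)) * (((k*i).choose k : ℚ)) := by
    intro i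
    have h0 : (0 + i • 1 : ℕ) = i := by simp
    rw [h0, Hf]
    push_cast [zsmul_eq_mul]
    ring
  rw [Finset.sum_congr rfl fun i _ => step1 i, Finset.sum_sub_distrib]
  -- shift the A-sum
  set g : ℕ → ℚ := fun i => (-1:ℚ)^(l-1-i) * (((l-1).choose i : ℚ)) * (((k*i).choose k : ℚ))
    with hg
  have hshift : ∑ i ∈ range l, g i = ∑ i ∈ range l, g (i+1) := by
    have h1 : ∑ i ∈ range ((l-1)+1), g i
        = (∑ i ∈ range (l-1), g (i+1)) + g 0 := Finset.sum_range_succ' g (l-1)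
    have h2 : g 0 = 0 := by
      simp [hg, Nat.choose_eq_zero_of_lt hk]
    have h3 : ∑ i ∈ range ((l-1)+1), (fun i => g (i+1)) i
        = (∑ i ∈ range (l-1), g (i+1)) + g ((l-1)+1) :=
      Finset.sum_range_succ (fun i => g (i+1)) (l-1)
    have h4 : g ((l-1)+1) = 0 := by
      have : (l-1).choose ((l-1)+1) = 0 := Nat.choose_eq_zero_of_lt (by omega)
      simp [hg, this]
    rw [hl1] at h1 h3 h4
    rw [h1, h2, h3, h4]
  rw [hshift]
  -- reflect the b-sum
  rw [b, ← Finset.sum_range_reflect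
    (fun i => (-1 : ℚ) ^ i * (l.choose i : ℚ) * ((k * (l - i)).choose k : ℚ)) l,
    Finset.mul_sum, ← Finset.sum_sub_distrib]
  refine Finset.sum_congr rfl fun i hi => ?_
  have hi' : i < l := mem_range.mp hi
  have e1 : l - 1 - (l - 1 - i) = i := by omega
  have e2 : l - (l - 1 - i) = i + 1 := by omega
  have e3 : l.choose (l - 1 - i) = l.choose (i+1) := by
    have h := Nat.choose_symm (n := l) (k := l - 1 - i) (by omega)
    rw [e2] at h
    exact h.symm
  have e4 : k * (i+1) = k*i + k := by ring
  rw [e3, e2, e4]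
  -- now per-term identity
  have key := key_term k l i hk hi'
  have hsign : g (i+1) = -((-1:ℚ)^(l-1-i)) * (((l-1).choose (i+1) : ℚ))
      * (((k*i+k).choose k : ℚ)) := by
    rcases eq_or_lt_of_le (Nat.succ_le_of_lt hi') with heq | hlt
    · have hc : (l-1).choose (i+1) = 0 := Nat.choose_eq_zero_of_lt (by omega)
      simp [hg, hc]
    · have he : l - 1 - i = (l - 1 - (i+1)) + 1 := by omega
      simp only [hg]
      rw [e4, he, pow_succ]
      ring
  rw [hsign]
  linear_combination ((-1:ℚ)^(l-1-i)) * key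

open Nat Polynomial in
theorem diff_zero_of_ge (k j : ℕ) (hk : 1 ≤ k) (hj : k ≤ j) :
    (fwdDiff 1)^[j] (Hf k) = 0 := by
  have hfun : Hf k = fun n : ℕ => (Qpoly k).eval (n:ℚ) := funext (Hf_eval k hk)
  rw [hfun]
  exact fwdDiff_iter_poly_eval j (Qpoly k)
    (lt_of_lt_of_le (Qpoly_degree k hk) (by exact_mod_cast hj))

theorem stmt_3 (k m : ℕ) (hk : 2 ≤ k) (hm : 1 ≤ m) :
    f k m = (m : ℚ) +
      ∑ i ∈ Finset.Icc 1 (m - 1),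
        (((k * (i + 1) - 1).choose k : ℚ) - ((k * i).choose k : ℚ)) := by
  have hk1 : 1 ≤ k := by omega
  have hH0 : Hf k 0 = 0 := by
    have h1 : (k-1).choose k = 0 := Nat.choose_eq_zero_of_lt (by omega)
    have h2 : Nat.choose 0 k = 0 := Nat.choose_eq_zero_of_lt (by omega)
    simp [Hf, h1, h2]
  -- Step A : RHS sum = ∑_{i ∈ range m} Hf k i
  have stepA : ∑ i ∈ Finset.Icc 1 (m - 1),
        (((k * (i + 1) - 1).choose k : ℚ) - ((k * i).choose k : ℚ))
      = ∑ i ∈ range m, Hf k i := by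
    have hIcc : Finset.Icc 1 (m-1) = Finset.Ico 1 m := by
      rw [← Finset.Ico_add_one_right_eq_Icc]
      congr 1
      omega
    have hterm : ∀ i : ℕ, (((k * (i + 1) - 1).choose k : ℚ) - ((k * i).choose k : ℚ))
        = Hf k i := by
      intro i
      have : k * (i+1) - 1 = k*i + k - 1 := by
        have : k * (i+1) = k*i + k := by ring
        omega
      rw [this, Hf]
    rw [hIcc, Finset.sum_congr rfl fun i _ => hterm i, range_eq_Ico,
      ← Finset.sum_Ico_consecutive _ (Nat.zero_le 1) hm]
    have : ∑ i ∈ Finset.Ico 0 1, Hf k i = 0 := by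
      simp [hH0]
    rw [this, zero_add]
  -- Step B : Newton expansion + hockey stick
  set D : ℕ → ℚ := fun j => (fwdDiff 1)^[j] (Hf k) 0 with hD
  have stepB : ∑ i ∈ range m, Hf k i
      = ∑ j ∈ range m, (m.choose (j+1) : ℚ) * D j := by
    have hNewton : ∀ i : ℕ, Hf k i = ∑ j ∈ range (i+1), (i.choose j) • D j := by
      intro i
      have := shift_eq_sum_fwdDiff_iter 1 (Hf k) i 0
      simpa using this
    rw [Finset.sum_congr rfl fun i _ => hNewton i]
    have swap := Finset.sum_Ico_Ico_comm 0 m (fun j i => (i.choose j) • D j)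
    simp only [range_eq_Ico]
    rw [← swap]
    refine Finset.sum_congr rfl fun j hj => ?_
    have hj' : j < m := (Finset.mem_Ico.mp hj).2
    rw [← Finset.sum_smul]
    have hIco : Finset.Ico j m = Finset.Icc j (m-1) := by
      rw [← Finset.Ico_add_one_right_eq_Icc]
      congr 1
      omega
    have hhs : ∑ i ∈ Finset.Ico j m, i.choose j = m.choose (j+1) := by
      rw [hIco, Nat.sum_Icc_choose]
      congr 1
      omega
    rw [hhs, nsmul_eq_mul]
  -- Step C : match with the b-sum
  have hD0 : D 0 = 0 := by simp [hD, hH0]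
  have hDk : ∀ j, k ≤ j → D j = 0 := by
    intro j hj
    simp [hD, diff_zero_of_ge k j hk1 hj]
  have stepC : ∑ l ∈ Finset.Icc 2 k, b k l * (m.choose l : ℚ)
      = ∑ j ∈ range m, (m.choose (j+1) : ℚ) * D j := by
    have e1 : ∑ l ∈ Finset.Icc 2 k, b k l * (m.choose l : ℚ)
        = ∑ j ∈ Finset.Icc 1 (k-1), (m.choose (j+1) : ℚ) * D j := by
      refine Finset.sum_bij' (fun l _ => l - 1) (fun j _ => j + 1) ?_ ?_ ?_ ?_ ?_
      · intro l hl
        have := Finset.mem_Icc.mp hl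
        simp only [Finset.mem_Icc]
        omega
      · intro j hj
        have := Finset.mem_Icc.mp hj
        simp only [Finset.mem_Icc]
        omega
      · intro l hl
        have := Finset.mem_Icc.mp hl
        omega
      · intro j hj
        have := Finset.mem_Icc.mp hj
        omega
      · intro l hl
        have hl2 := Finset.mem_Icc.mp hl
        rw [b_eq_diff k l hk1 (by omega)]
        have : l - 1 + 1 = l := by omega
        rw [this, mul_comm]
    have e2 : ∑ j ∈ range m, (m.choose (j+1) : ℚ) * D j
        = ∑ j ∈ range (m+k), (m.choose (j+1) : ℚ) * D j := by
      apply Finset.sum_subset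
      · intro x hx
        simp only [Finset.mem_range] at hx ⊢
        omega
      · intro x _ hx
        simp only [Finset.mem_range, not_lt] at hx
        have : m.choose (x+1) = 0 := Nat.choose_eq_zero_of_lt (by omega)
        rw [this]
        simp
    have e3 : ∑ j ∈ Finset.Icc 1 (k-1), (m.choose (j+1) : ℚ) * D j
        = ∑ j ∈ range (m+k), (m.choose (j+1) : ℚ) * D j := by
      apply Finset.sum_subset
      · intro x hx
        have := Finset.mem_Icc.mp hx
        simp only [Finset.mem_range]
        omega
      · intro x _ hx
        simp only [Finset.mem_Icc, not_and_or, not_le] at hx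
        rcases hx with h | h
        · interval_cases x
          rw [hD0, mul_zero]
        · rw [hDk x (by omega), mul_zero]
    rw [e1, e2, e3]
  rw [f, stepA, stepB, ← stepC]

end helpers
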